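/- Let n ≥ 4 and 1 ≤ i < j < k < l ≤ n. Then the Birman–Ko–Lee generators a_{ik} and a_{jl} generate a free subgroup of B_n of rank 2; equivalently, the group homomorphism from the free group on two generators to B_n sending the generators to a_{ik} and a_{jl} is injective. -/

import Mathlib

/-- Defining relations of the braid group on `n` strands: the Artin generators are
`σ_0, …, σ_{n-2}` (`0`-based), indexed by `Fin (n-1)`. -/
def braidRels (n : ℕ) : Set (FreeGroup (Fin (n - 1))) :=
  {r | ∃ i j : Fin (n - 1),
    (((j : ℕ) = (i : ℕ) + 1) ∧
      r = FreeGroup.of i * FreeGroup.of j * FreeGroup.of i *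
        (FreeGroup.of j * FreeGroup.of i * FreeGroup.of j)⁻¹) ∨
    (((i : ℕ) + 2 ≤ (j : ℕ)) ∧
      r = FreeGroup.of i * FreeGroup.of j * (FreeGroup.of j * FreeGroup.of i)⁻¹)}

/-- The braid group on `n` strands, as a presented group. -/
abbrev BraidGroup (n : ℕ) := PresentedGroup (braidRels n)

/-- The Artin generator `σ_i` of the braid group (`0`-based index `i : Fin (n-1)`). -/
def braidGen {n : ℕ} (i : Fin (n - 1)) : BraidGroup n := PresentedGroup.of i

/-- The Artin generator `σ_k` for a natural number index `k` (`0`-based);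
equal to `1` if `k` is out of range. -/
def braidGen' (n k : ℕ) : BraidGroup n :=
  if h : k < n - 1 then braidGen ⟨k, h⟩ else 1

/-- The Birman–Ko–Lee generator `a_{ij}` (`0`-based): for `i < j`,
`a_{ij} = σ_i σ_{i+1} ⋯ σ_{j-2} σ_{j-1} σ_{j-2}⁻¹ ⋯ σ_{i+1}⁻¹ σ_i⁻¹`. -/
def bkl (n i j : ℕ) : BraidGroup n :=
  (((List.range (j - 1 - i)).map fun t => braidGen' n (i + t)).prod) *
    braidGen' n (j - 1) *
    (((List.range (j - 1 - i)).map fun t => braidGen' n (i + t)).prod)⁻¹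

/-- The strand index `i` as an element of `Fin n` (from `i : Fin (n-1)`). -/
def finLo {n : ℕ} (i : Fin (n - 1)) : Fin n := ⟨i, by have := i.isLt; omega⟩

/-- The strand index `i+1` as an element of `Fin n` (from `i : Fin (n-1)`). -/
def finHi {n : ℕ} (i : Fin (n - 1)) : Fin n := ⟨(i : ℕ) + 1, by have := i.isLt; omega⟩

/-- The Hurwitz move corresponding to the braid generator `σ_i`:
`σ_i · (g_1,…,g_n) = (g_1,…,g_{i-1}, g_{i+1}, g_{i+1}⁻¹ g_i g_{i+1}, g_{i+2},…,g_n)`. -/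
def hurwitzMove {G : Type*} [Group G] {n : ℕ} (i : Fin (n - 1)) (g : Fin n → G) :
    Fin n → G := fun k =>
  if k = finLo i then g (finHi i)
  else if k = finHi i then (g (finHi i))⁻¹ * g (finLo i) * g (finHi i)
  else g k

namespace BKLFree

def Tfun (p : ℕ) (x : ℕ → ℚ) : ℕ → ℚ := fun m =>
  if m = p then -99 * x p + 100 * x (p+1) else if m = p+1 then x p else x m

def Tinv (p : ℕ) (x : ℕ → ℚ) : ℕ → ℚ := fun m =>
  if m = p then x (p+1) else if m = p+1 then (x p + 99 * x (p+1)) / 100 else x m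

set_option maxHeartbeats 1000000 in
lemma Tfun_Tinv (p : ℕ) (x : ℕ → ℚ) : Tfun p (Tinv p x) = x := by
  funext m
  simp only [Tfun, Tinv]
  split_ifs <;> subst_vars <;> first | rfl | (exfalso; omega) | ring

set_option maxHeartbeats 1000000 in
lemma Tinv_Tfun (p : ℕ) (x : ℕ → ℚ) : Tinv p (Tfun p x) = x := by
  funext m
  simp only [Tfun, Tinv]
  split_ifs <;> subst_vars <;> first | rfl | (exfalso; omega) | ring

def braidT (p : ℕ) : Equiv.Perm (ℕ → ℚ) where
  toFun := Tfun p
  invFun := Tinv p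
  left_inv := Tinv_Tfun p
  right_inv := Tfun_Tinv p

set_option maxHeartbeats 2000000 in
lemma rel1_fun (p : ℕ) (x : ℕ → ℚ) :
    Tfun p (Tfun (p+1) (Tfun p x)) = Tfun (p+1) (Tfun p (Tfun (p+1) x)) := by
  funext m
  simp only [Tfun]
  split_ifs <;> subst_vars <;> first | rfl | (exfalso; omega) | ring

set_option maxHeartbeats 2000000 in
lemma rel2_fun (p q : ℕ) (h : p + 2 ≤ q) (x : ℕ → ℚ) :
    Tfun p (Tfun q x) = Tfun q (Tfun p x) := by
  funext m
  simp only [Tfun]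
  split_ifs <;> subst_vars <;> first | rfl | (exfalso; omega) | ring

lemma braid_rel1 (p : ℕ) :
    braidT p * braidT (p+1) * braidT p = braidT (p+1) * braidT p * braidT (p+1) :=
  Equiv.ext fun x => rel1_fun p x

lemma braid_rel2 (p q : ℕ) (h : p + 2 ≤ q) :
    braidT p * braidT q = braidT q * braidT p :=
  Equiv.ext fun x => rel2_fun p q h x

/-- The Burau representation (t = 100). -/
def burau (n : ℕ) : BraidGroup n →* Equiv.Perm (ℕ → ℚ) :=
  PresentedGroup.toGroup (f := fun i : Fin (n-1) => braidT (i:ℕ)) (by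
    rintro r ⟨i, j, ⟨hij, rfl⟩ | ⟨hij, rfl⟩⟩ <;>
      simp only [map_mul, map_inv, FreeGroup.lift_apply_of, mul_inv_eq_one]
    · rw [hij]; exact braid_rel1 _
    · exact braid_rel2 _ _ hij)

lemma burau_gen' {n : ℕ} (m : ℕ) (h : m < n - 1) :
    burau n (braidGen' n m) = braidT m := by
  rw [braidGen', dif_pos h]
  exact PresentedGroup.toGroup.of _

lemma bkl_base (n p : ℕ) : bkl n p (p+1) = braidGen' n p := by
  simp [bkl]

lemma bkl_succ (n p q : ℕ) (h : p + 1 < q) :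
    bkl n p q = braidGen' n p * bkl n (p+1) q * (braidGen' n p)⁻¹ := by
  have h1 : q - 1 - p = (q - 1 - (p+1)) + 1 := by omega
  have h2 : (fun t => braidGen' n (p + Nat.succ t)) = (fun t => braidGen' n ((p+1) + t)) := by
    funext t; congr 1; omega
  simp only [bkl, h1, List.range_succ_eq_map, List.map_cons, List.prod_cons, List.map_map,
    Function.comp_def, h2, Nat.add_zero, mul_inv_rev]
  group

end BKLFree

namespace BKLFree2
open BKLFree

def zeta (p q : ℕ) (x : ℕ → ℚ) : ℚ :=
  -100 * x p - 99 * (∑ m ∈ Finset.Ico (p+1) q, 100^(m-p) * x m) + 100^(q-p) * x q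

def bandFun (p q : ℕ) (x : ℕ → ℚ) : ℕ → ℚ := fun m =>
  if m = p then x p + zeta p q x
  else if m = q then x q - zeta p q x / 100^(q-p)
  else x m

lemma zeta_base (p : ℕ) (x : ℕ → ℚ) : zeta p (p+1) x = -100 * x p + 100 * x (p+1) := by
  simp [zeta, Nat.add_sub_cancel_left]

lemma bandFun_base (p : ℕ) : bandFun p (p+1) = Tfun p := by
  funext x m
  simp only [bandFun, Tfun, zeta_base, Nat.add_sub_cancel_left, pow_one]
  split_ifs <;> first | rfl | (exfalso; omega) | ring

lemma zeta_step (p q : ℕ) (h : p + 1 < q) (x : ℕ → ℚ) :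
    zeta (p+1) q (Tinv p x) = zeta p q x / 100 := by
  have e1 : ∀ m ∈ Finset.Ico (p+1+1) q, 100^(m-(p+1)) * (Tinv p x) m
      = (100:ℚ)⁻¹ * (100^(m-p) * x m) := by
    intro m hm
    simp only [Finset.mem_Ico] at hm
    have hmp : m ≠ p := by omega
    have hmp1 : m ≠ p + 1 := by omega
    have he : m - p = (m - (p+1)) + 1 := by omega
    simp only [Tinv, if_neg hmp, if_neg hmp1, he, pow_succ]
    ring
  have e2 : ∑ m ∈ Finset.Ico (p+1) q, (100:ℚ)^(m-p) * x m
      = 100 * x (p+1) + ∑ m ∈ Finset.Ico (p+1+1) q, (100:ℚ)^(m-p) * x m := by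
    rw [Finset.sum_eq_sum_Ico_succ_bot h]
    simp [Nat.add_sub_cancel_left]
  have hq : (Tinv p x) q = x q := by
    simp only [Tinv, if_neg (by omega : q ≠ p), if_neg (by omega : q ≠ p+1)]
  have hqp : q - p = (q - (p+1)) + 1 := by omega
  rw [zeta, zeta, Finset.sum_congr rfl e1, ← Finset.mul_sum, hq, e2]
  simp only [Tinv, if_pos rfl, if_neg (by omega : p + 1 ≠ p), hqp, pow_succ, eq_self_iff_true, if_true]
  field_simp
  ring

lemma bandFun_step (p q : ℕ) (h : p + 1 < q) (x : ℕ → ℚ) :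
    Tfun p (bandFun (p+1) q (Tinv p x)) = bandFun p q x := by
  have hz := zeta_step p q h x
  have hTp : (Tinv p x) p = x (p+1) := by simp [Tinv]
  have hTp1 : (Tinv p x) (p+1) = (x p + 99 * x (p+1))/100 := by
    simp only [Tinv, if_neg (show ¬ (p + 1 = p) by omega), if_pos rfl, eq_self_iff_true, if_true]
  have hq : (Tinv p x) q = x q := by
    simp only [Tinv, if_neg (show ¬ (q = p) by omega), if_neg (show ¬ (q = p+1) by omega)]
  have hqp : q - p = (q - (p+1)) + 1 := by omega
  have yp : bandFun (p+1) q (Tinv p x) p = x (p+1) := by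
    simp only [bandFun, if_neg (show ¬ (p = p+1) by omega), if_neg (show ¬ (p = q) by omega), hTp]
  have yp1 : bandFun (p+1) q (Tinv p x) (p+1)
      = (x p + 99 * x (p+1))/100 + zeta p q x / 100 := by
    simp only [bandFun, if_pos rfl, hTp1, hz, eq_self_iff_true, if_true]
  have yq : bandFun (p+1) q (Tinv p x) q = x q - zeta p q x / 100^(q-p) := by
    simp only [bandFun, if_neg (show ¬ (q = p+1) by omega), if_pos rfl, hq, hz, hqp, pow_succ, eq_self_iff_true, if_true]
    ring
  funext m
  simp only [Tfun]
  by_cases h1 : m = p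
  · subst h1
    rw [if_pos rfl, yp, yp1]
    simp only [bandFun, if_pos rfl, eq_self_iff_true, if_true]
    ring
  by_cases h2 : m = p + 1
  · subst h2
    rw [if_neg h1, if_pos rfl, yp]
    simp only [bandFun, if_neg h1, if_neg (show ¬ (p+1 = q) by omega)]
  by_cases h3 : m = q
  · subst h3
    rw [if_neg h1, if_neg h2, yq]
    simp only [bandFun, if_neg h1, if_pos rfl, eq_self_iff_true, if_true]
  · rw [if_neg h1, if_neg h2]
    simp only [bandFun, if_neg h2, if_neg h3, Tinv, if_neg h1, if_neg h3]

lemma burau_bkl (n : ℕ) : ∀ d p q, p < q → q < n → q - p = d + 1 →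
    ⇑(burau n (bkl n p q)) = bandFun p q := by
  intro d
  induction d with
  | zero =>
    intro p q hpq hqn he
    have : q = p + 1 := by omega
    subst this
    rw [bkl_base, burau_gen' p (by omega), bandFun_base]
    rfl
  | succ d ih =>
    intro p q hpq hqn he
    have h1 : p + 1 < q := by omega
    rw [bkl_succ n p q h1, map_mul, map_mul, map_inv, burau_gen' p (by omega)]
    have hih := ih (p+1) q h1 hqn (by omega)
    funext x
    have : ⇑(burau n (bkl n (p+1) q)) ((braidT p)⁻¹ x) = bandFun (p+1) q (Tinv p x) := by
      rw [hih]; rfl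
    calc (braidT p * burau n (bkl n (p+1) q) * (braidT p)⁻¹) x
        = braidT p ((burau n (bkl n (p+1) q)) ((braidT p)⁻¹ x)) := rfl
      _ = Tfun p (bandFun (p+1) q (Tinv p x)) := by rw [this]; rfl
      _ = bandFun p q x := bandFun_step p q h1 x

section Vectors

def vA (i j k l : ℕ) : ℕ → ℚ := fun m =>
  if m = i then 100^(k+j+l-i) else if m = k then -(100^(j+l)) else 0

def vB (i j k l : ℕ) : ℕ → ℚ := fun m =>
  if m = j then -(100^(k+l)) else if m = l then 100^(k+j) else 0

def iota (i j k l : ℕ) (z : ℚ × ℚ) : ℕ → ℚ :=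
  fun m => z.1 * vA i j k l m + z.2 * vB i j k l m

def MAf (z : ℚ × ℚ) : ℚ × ℚ := (-100*z.1 + 99*z.2, z.2)
def MBf (z : ℚ × ℚ) : ℚ × ℚ := (z.1, -99*z.1 - 100*z.2)

variable {i j k l : ℕ}

lemma vA_i : vA i j k l i = 100^(k+j+l-i) := by
  simp [vA]

lemma vA_k (h : i < k) : vA i j k l k = -(100^(j+l)) := by
  simp only [vA]; rw [if_neg (show ¬ (k = i) by omega)]; simp

lemma vA_other {m : ℕ} (hmi : m ≠ i) (hmk : m ≠ k) : vA i j k l m = 0 := by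
  simp only [vA]; rw [if_neg hmi, if_neg hmk]

lemma vB_j : vB i j k l j = -(100^(k+l)) := by
  simp [vB]

lemma vB_l (h : j < l) : vB i j k l l = 100^(k+j) := by
  simp only [vB]; rw [if_neg (show ¬ (l = j) by omega)]; simp

lemma vB_other {m : ℕ} (hmj : m ≠ j) (hml : m ≠ l) : vB i j k l m = 0 := by
  simp only [vB]; rw [if_neg hmj, if_neg hml]

lemma zeta_lin (p q : ℕ) (a b : ℚ) (x y : ℕ → ℚ) :
    zeta p q (fun m => a * x m + b * y m) = a * zeta p q x + b * zeta p q y := by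
  have e : ∀ m ∈ Finset.Ico (p+1) q, (100:ℚ)^(m-p) * (a * x m + b * y m)
      = a * (100^(m-p) * x m) + b * (100^(m-p) * y m) := fun m _ => by ring
  rw [zeta, Finset.sum_congr rfl e, Finset.sum_add_distrib, ← Finset.mul_sum, ← Finset.mul_sum,
    zeta, zeta]
  ring

variable (h1 : i < j) (h2 : j < k) (h3 : k < l)
include h1 h2 h3

lemma zeta_ik_vA : zeta i k (vA i j k l) = -101 * 100^(k+j+l-i) := by
  have hp : (100:ℚ)^(k-i) * 100^(j+l) = 100^(k+j+l-i) := by rw [← pow_add]; congr 1; omega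
  have hs : ∑ m ∈ Finset.Ico (i+1) k, (100:ℚ)^(m-i) * vA i j k l m = 0 := by
    apply Finset.sum_eq_zero
    intro m hm
    simp only [Finset.mem_Ico] at hm
    rw [vA_other (by omega) (by omega)]
    ring
  rw [zeta, hs, vA_i, vA_k (by omega)]
  linear_combination -hp

lemma zeta_ik_vB : zeta i k (vB i j k l) = 99 * 100^(k+j+l-i) := by
  have hp : (100:ℚ)^(j-i) * 100^(k+l) = 100^(k+j+l-i) := by rw [← pow_add]; congr 1; omega
  have hs : ∑ m ∈ Finset.Ico (i+1) k, (100:ℚ)^(m-i) * vB i j k l m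
      = 100^(j-i) * vB i j k l j := by
    apply Finset.sum_eq_single_of_mem j (Finset.mem_Ico.mpr ⟨by omega, h2⟩)
    intro b hb hbj
    simp only [Finset.mem_Ico] at hb
    rw [vB_other hbj (by omega)]
    ring
  rw [zeta, hs, vB_j, vB_other (by omega) (by omega), vB_other (by omega) (by omega)]
  linear_combination 99 * hp

lemma zeta_jl_vA : zeta j l (vA i j k l) = 99 * 100^(k+l) := by
  have hp : (100:ℚ)^(k-j) * 100^(j+l) = 100^(k+l) := by rw [← pow_add]; congr 1; omega
  have hs : ∑ m ∈ Finset.Ico (j+1) l, (100:ℚ)^(m-j) * vA i j k l m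
      = 100^(k-j) * vA i j k l k := by
    apply Finset.sum_eq_single_of_mem k (Finset.mem_Ico.mpr ⟨by omega, h3⟩)
    intro b hb hbk
    simp only [Finset.mem_Ico] at hb
    rw [vA_other (by omega) hbk]
    ring
  rw [zeta, hs, vA_k (by omega), vA_other (by omega) (by omega),
    vA_other (by omega) (by omega)]
  linear_combination 99 * hp

lemma zeta_jl_vB : zeta j l (vB i j k l) = 101 * 100^(k+l) := by
  have hp : (100:ℚ)^(l-j) * 100^(k+j) = 100^(k+l) := by rw [← pow_add]; congr 1; omega
  have hs : ∑ m ∈ Finset.Ico (j+1) l, (100:ℚ)^(m-j) * vB i j k l m = 0 := by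
    apply Finset.sum_eq_zero
    intro m hm
    simp only [Finset.mem_Ico] at hm
    rw [vB_other (by omega) (by omega)]
    ring
  rw [zeta, hs, vB_j, vB_l (by omega)]
  linear_combination hp

end Vectors

section Band2
variable {i j k l : ℕ}
variable (h1 : i < j) (h2 : j < k) (h3 : k < l)
include h1 h2 h3

lemma bandA_iota (z : ℚ × ℚ) :
    bandFun i k (iota i j k l z) = iota i j k l (MAf z) := by
  have hz : zeta i k (iota i j k l z)
      = -101 * 100^(k+j+l-i) * z.1 + 99 * 100^(k+j+l-i) * z.2 := by
    rw [show iota i j k l z = fun m => z.1 * vA i j k l m + z.2 * vB i j k l m from rfl,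
      zeta_lin, zeta_ik_vA h1 h2 h3, zeta_ik_vB h1 h2 h3]
    ring
  have hp : (100:ℚ)^(k+j+l-i) = 100^(k-i) * 100^(j+l) := by rw [← pow_add]; congr 1; omega
  have hne : (100:ℚ)^(k-i) ≠ 0 := pow_ne_zero _ (by norm_num)
  funext m
  simp only [bandFun, iota]
  by_cases hmi : m = i
  · subst hmi
    rw [if_pos rfl, hz, vA_i, vB_other (by omega) (by omega), MAf]
    ring
  by_cases hmk : m = k
  · subst hmk
    rw [if_neg hmi, if_pos rfl, hz, vA_k (by omega), vB_other (by omega) (by omega), MAf, hp]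
    field_simp
    ring
  · rw [if_neg hmi, if_neg hmk, vA_other hmi hmk, MAf]
    ring

lemma bandB_iota (z : ℚ × ℚ) :
    bandFun j l (iota i j k l z) = iota i j k l (MBf z) := by
  have hz : zeta j l (iota i j k l z)
      = 99 * 100^(k+l) * z.1 + 101 * 100^(k+l) * z.2 := by
    rw [show iota i j k l z = fun m => z.1 * vA i j k l m + z.2 * vB i j k l m from rfl,
      zeta_lin, zeta_jl_vA h1 h2 h3, zeta_jl_vB h1 h2 h3]
    ring
  have hp : (100:ℚ)^(k+l) = 100^(l-j) * 100^(k+j) := by rw [← pow_add]; congr 1; omega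
  have hne : (100:ℚ)^(l-j) ≠ 0 := pow_ne_zero _ (by norm_num)
  funext m
  simp only [bandFun, iota]
  by_cases hmj : m = j
  · subst hmj
    rw [if_pos rfl, hz, vB_j, vA_other (by omega) (by omega), MBf]
    ring
  by_cases hml : m = l
  · subst hml
    rw [if_neg hmj, if_pos rfl, hz, vB_l (by omega), vA_other (by omega) (by omega), MBf, hp]
    field_simp
    ring
  · rw [if_neg hmj, if_neg hml, vB_other hmj hml, MBf]
    ring

end Band2

section PingPong

abbrev P2 := {v : ℚ × ℚ // v ≠ 0}

lemma ne_zero_iff (v : ℚ × ℚ) : v ≠ 0 ↔ ¬ (v.1 = 0 ∧ v.2 = 0) := by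
  rw [Ne, Prod.ext_iff]
  simp

lemma MAf_ne {v : ℚ × ℚ} (h : v ≠ 0) : MAf v ≠ 0 := by
  rw [ne_zero_iff] at h ⊢
  simp only [MAf]
  intro ⟨e1, e2⟩
  exact h ⟨by linarith, e2⟩

lemma MBf_ne {v : ℚ × ℚ} (h : v ≠ 0) : MBf v ≠ 0 := by
  rw [ne_zero_iff] at h ⊢
  simp only [MBf]
  intro ⟨e1, e2⟩
  exact h ⟨e1, by linarith⟩

def MAinv (z : ℚ × ℚ) : ℚ × ℚ := ((99*z.2 - z.1)/100, z.2)
def MBinv (z : ℚ × ℚ) : ℚ × ℚ := (z.1, (-99*z.1 - z.2)/100)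

lemma MAinv_ne {v : ℚ × ℚ} (h : v ≠ 0) : MAinv v ≠ 0 := by
  rw [ne_zero_iff] at h ⊢
  simp only [MAinv]
  intro ⟨e1, e2⟩
  refine h ⟨?_, e2⟩
  rw [e2] at e1
  field_simp at e1
  linarith

lemma MBinv_ne {v : ℚ × ℚ} (h : v ≠ 0) : MBinv v ≠ 0 := by
  rw [ne_zero_iff] at h ⊢
  simp only [MBinv]
  intro ⟨e1, e2⟩
  refine h ⟨e1, ?_⟩
  rw [e1] at e2
  field_simp at e2
  linarith

def MA : Equiv.Perm P2 where
  toFun v := ⟨MAf v.1, MAf_ne v.2⟩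
  invFun v := ⟨MAinv v.1, MAinv_ne v.2⟩
  left_inv v := by
    apply Subtype.ext
    simp only [MAf, MAinv]
    apply Prod.ext <;> simp <;> ring
  right_inv v := by
    apply Subtype.ext
    simp only [MAf, MAinv]
    apply Prod.ext <;> simp <;> ring

def MB : Equiv.Perm P2 where
  toFun v := ⟨MBf v.1, MBf_ne v.2⟩
  invFun v := ⟨MBinv v.1, MBinv_ne v.2⟩
  left_inv v := by
    apply Subtype.ext
    simp only [MBf, MBinv]
    apply Prod.ext <;> simp <;> ring
  right_inv v := by
    apply Subtype.ext
    simp only [MBf, MBinv]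
    apply Prod.ext <;> simp <;> ring

def uc (z : ℚ × ℚ) : ℚ := 101*z.1 - 99*z.2
def wc (z : ℚ × ℚ) : ℚ := 99*z.1 + 101*z.2

def XS : Bool → Set P2
  | true => {v | |uc v.1| > 999 * |v.1.2|}
  | false => {v | |wc v.1| > 999 * |v.1.1|}

def YS : Bool → Set P2
  | true => {v | |uc v.1| < 10 * |v.1.2|}
  | false => {v | |wc v.1| < 10 * |v.1.1|}

lemma XA_XB_empty (v : P2) (hA : v ∈ XS true) (hB : v ∈ XS false) : False := by
  obtain ⟨⟨x, y⟩, hv0⟩ := v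
  rw [ne_zero_iff] at hv0
  simp only [XS, Set.mem_setOf_eq, uc, wc] at hA hB
  rcases abs_cases (101*x - 99*y) with ⟨e1, f1⟩ | ⟨e1, f1⟩ <;>
    rcases abs_cases (99*x + 101*y) with ⟨e2, f2⟩ | ⟨e2, f2⟩ <;>
    rcases abs_cases x with ⟨e3, f3⟩ | ⟨e3, f3⟩ <;>
    rcases abs_cases y with ⟨e4, f4⟩ | ⟨e4, f4⟩ <;>
    rw [e1, e4] at hA <;> rw [e2, e3] at hB <;>
    exact hv0 ⟨by linarith, by linarith⟩

lemma XA_YA_empty (v : P2) (hA : v ∈ XS true) (hB : v ∈ YS true) : False := by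
  obtain ⟨⟨x, y⟩, hv0⟩ := v
  rw [ne_zero_iff] at hv0
  simp only [XS, YS, Set.mem_setOf_eq, uc] at hA hB
  have h4 := abs_nonneg (101*x - 99*y)
  have h5 := abs_nonneg y
  have hy : |y| = 0 := by linarith
  rw [hy] at hA hB
  linarith

lemma XB_YB_empty (v : P2) (hA : v ∈ XS false) (hB : v ∈ YS false) : False := by
  obtain ⟨⟨x, y⟩, hv0⟩ := v
  rw [ne_zero_iff] at hv0
  simp only [XS, YS, Set.mem_setOf_eq, wc] at hA hB
  have h4 := abs_nonneg (99*x + 101*y)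
  have h5 := abs_nonneg x
  have hx : |x| = 0 := by linarith
  rw [hx] at hA hB
  linarith

lemma XA_YB_empty (v : P2) (hA : v ∈ XS true) (hB : v ∈ YS false) : False := by
  obtain ⟨⟨x, y⟩, hv0⟩ := v
  rw [ne_zero_iff] at hv0
  simp only [XS, YS, Set.mem_setOf_eq, uc, wc] at hA hB
  rcases abs_cases (101*x - 99*y) with ⟨e1, f1⟩ | ⟨e1, f1⟩ <;>
    rcases abs_cases (99*x + 101*y) with ⟨e2, f2⟩ | ⟨e2, f2⟩ <;>
    rcases abs_cases x with ⟨e3, f3⟩ | ⟨e3, f3⟩ <;>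
    rcases abs_cases y with ⟨e4, f4⟩ | ⟨e4, f4⟩ <;>
    rw [e1, e4] at hA <;> rw [e2, e3] at hB <;>
    exact hv0 ⟨by linarith, by linarith⟩

lemma XB_YA_empty (v : P2) (hA : v ∈ XS false) (hB : v ∈ YS true) : False := by
  obtain ⟨⟨x, y⟩, hv0⟩ := v
  rw [ne_zero_iff] at hv0
  simp only [XS, YS, Set.mem_setOf_eq, uc, wc] at hA hB
  rcases abs_cases (101*x - 99*y) with ⟨e1, f1⟩ | ⟨e1, f1⟩ <;>
    rcases abs_cases (99*x + 101*y) with ⟨e2, f2⟩ | ⟨e2, f2⟩ <;>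
    rcases abs_cases x with ⟨e3, f3⟩ | ⟨e3, f3⟩ <;>
    rcases abs_cases y with ⟨e4, f4⟩ | ⟨e4, f4⟩ <;>
    rw [e2, e3] at hA <;> rw [e1, e4] at hB <;>
    exact hv0 ⟨by linarith, by linarith⟩

lemma YA_YB_empty (v : P2) (hA : v ∈ YS true) (hB : v ∈ YS false) : False := by
  obtain ⟨⟨x, y⟩, hv0⟩ := v
  rw [ne_zero_iff] at hv0
  simp only [YS, Set.mem_setOf_eq, uc, wc] at hA hB
  rcases abs_cases (101*x - 99*y) with ⟨e1, f1⟩ | ⟨e1, f1⟩ <;>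
    rcases abs_cases (99*x + 101*y) with ⟨e2, f2⟩ | ⟨e2, f2⟩ <;>
    rcases abs_cases x with ⟨e3, f3⟩ | ⟨e3, f3⟩ <;>
    rcases abs_cases y with ⟨e4, f4⟩ | ⟨e4, f4⟩ <;>
    rw [e1, e4] at hA <;> rw [e2, e3] at hB <;>
    exact hv0 ⟨by linarith, by linarith⟩

lemma uc_MAf (z : ℚ × ℚ) : uc (MAf z) = -100 * uc z := by simp only [uc, MAf]; ring
lemma uc_MAinv (z : ℚ × ℚ) : uc (MAinv z) = uc z / -100 := by simp only [uc, MAinv]; ring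
lemma wc_MBf (z : ℚ × ℚ) : wc (MBf z) = -100 * wc z := by simp only [wc, MBf]; ring
lemma wc_MBinv (z : ℚ × ℚ) : wc (MBinv z) = wc z / -100 := by simp only [wc, MBinv]; ring

lemma phi_injective :
    Function.Injective (FreeGroup.lift (fun b : Bool => if b then MA else MB) :
      FreeGroup Bool →* Equiv.Perm P2) := by
  apply FreeGroup.injective_lift_of_ping_pong _ XS YS
  · -- nonempty
    intro b
    cases b
    · exact ⟨⟨(0,1), by simp [ne_zero_iff]⟩, by simp [XS, wc]⟩
    · exact ⟨⟨(1,0), by simp [ne_zero_iff]⟩, by simp [XS, uc]⟩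
  · -- X pairwise disjoint
    intro b b' hbb'
    cases b <;> cases b' <;> simp at hbb' ⊢ <;> rw [Function.onFun, Set.disjoint_left] <;>
      intro v hv hv'
    · exact XA_XB_empty v hv' hv
    · exact XA_XB_empty v hv hv'
  · -- Y pairwise disjoint
    intro b b' hbb'
    cases b <;> cases b' <;> simp at hbb' ⊢ <;> rw [Function.onFun, Set.disjoint_left] <;>
      intro v hv hv'
    · exact YA_YB_empty v hv' hv
    · exact YA_YB_empty v hv hv'
  · -- X vs Y disjoint
    intro b b'
    cases b <;> cases b' <;> rw [Set.disjoint_left] <;> intro v hv hv'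
    · exact XB_YB_empty v hv hv'
    · exact XB_YA_empty v hv hv'
    · exact XA_YB_empty v hv hv'
    · exact XA_YA_empty v hv hv'
  · -- hX
    intro b
    cases b
    · -- b = false : MB
      intro z hz
      rw [if_neg (by simp)] at hz
      rw [Set.mem_smul_set] at hz
      obtain ⟨v, hv, rfl⟩ := hz
      obtain ⟨⟨x, y⟩, hv0⟩ := v
      rw [Set.mem_compl_iff] at hv
      simp only [YS, Set.mem_setOf_eq, not_lt, wc] at hv
      show _ ∈ XS false
      simp only [Equiv.Perm.smul_def, XS, Set.mem_setOf_eq, MB, Equiv.coe_fn_mk]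
      rw [show (MBf (x,y)).1 = x from rfl, wc_MBf]
      rw [abs_mul, show |(-100:ℚ)| = 100 by norm_num]
      rcases eq_or_ne x 0 with hx | hx
      · subst hx
        rw [ne_zero_iff] at hv0
        have hy : y ≠ 0 := fun hy => hv0 ⟨rfl, hy⟩
        have hwc : wc (0, y) ≠ 0 := by simp only [wc]; intro hc; exact hy (by linarith)
        have h6 := abs_pos.mpr hwc
        simp only [wc] at h6 ⊢
        simp only [abs_zero]
        linarith
      · have := abs_pos.mpr hx
        simp only [wc] at hv ⊢
        linarith
    · -- b = true : MA
      intro z hz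
      rw [if_pos rfl] at hz
      rw [Set.mem_smul_set] at hz
      obtain ⟨v, hv, rfl⟩ := hz
      obtain ⟨⟨x, y⟩, hv0⟩ := v
      rw [Set.mem_compl_iff] at hv
      simp only [YS, Set.mem_setOf_eq, not_lt, uc] at hv
      show _ ∈ XS true
      simp only [Equiv.Perm.smul_def, XS, Set.mem_setOf_eq, MA, Equiv.coe_fn_mk]
      rw [show (MAf (x,y)).2 = y from rfl, uc_MAf]
      rw [abs_mul, show |(-100:ℚ)| = 100 by norm_num]
      rcases eq_or_ne y 0 with hy | hy
      · subst hy
        rw [ne_zero_iff] at hv0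
        have hx : x ≠ 0 := fun hx => hv0 ⟨hx, rfl⟩
        have huc : uc (x, 0) ≠ 0 := by simp only [uc]; intro hc; exact hx (by linarith)
        have h6 := abs_pos.mpr huc
        simp only [uc] at h6 ⊢
        simp only [abs_zero]
        linarith
      · have := abs_pos.mpr hy
        simp only [uc] at hv ⊢
        linarith
  · -- hY
    intro b
    cases b
    · -- b = false : MB⁻¹
      intro z hz
      rw [Pi.inv_apply, if_neg (by simp)] at hz
      rw [Set.mem_smul_set] at hz
      obtain ⟨v, hv, rfl⟩ := hz
      obtain ⟨⟨x, y⟩, hv0⟩ := v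
      rw [Set.mem_compl_iff] at hv
      simp only [XS, Set.mem_setOf_eq, not_lt, wc] at hv
      show _ ∈ YS false
      simp only [Equiv.Perm.smul_def, YS, Set.mem_setOf_eq]
      rw [show ((MB⁻¹ : Equiv.Perm P2) ⟨(x,y), hv0⟩).1 = MBinv (x, y) from rfl]
      rw [show (MBinv (x,y)).1 = x from rfl, wc_MBinv]
      rw [abs_div, show |(-100:ℚ)| = 100 by norm_num]
      rcases eq_or_ne x 0 with hx | hx
      · exfalso
        subst hx
        rw [ne_zero_iff] at hv0
        have hy : y ≠ 0 := fun hy => hv0 ⟨rfl, hy⟩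
        have hwc : wc (0, y) ≠ 0 := by simp only [wc]; intro hc; exact hy (by linarith)
        have h6 := abs_pos.mpr hwc
        simp only [wc] at h6 hv
        simp only [abs_zero] at hv
        linarith
      · have := abs_pos.mpr hx
        simp only [wc] at hv ⊢
        linarith
    · -- b = true : MA⁻¹
      intro z hz
      rw [Pi.inv_apply, if_pos rfl] at hz
      rw [Set.mem_smul_set] at hz
      obtain ⟨v, hv, rfl⟩ := hz
      obtain ⟨⟨x, y⟩, hv0⟩ := v
      rw [Set.mem_compl_iff] at hv
      simp only [XS, Set.mem_setOf_eq, not_lt, uc] at hv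
      show _ ∈ YS true
      simp only [Equiv.Perm.smul_def, YS, Set.mem_setOf_eq]
      rw [show ((MA⁻¹ : Equiv.Perm P2) ⟨(x,y), hv0⟩).1 = MAinv (x, y) from rfl]
      rw [show (MAinv (x,y)).2 = y from rfl, uc_MAinv]
      rw [abs_div, show |(-100:ℚ)| = 100 by norm_num]
      rcases eq_or_ne y 0 with hy | hy
      · exfalso
        subst hy
        rw [ne_zero_iff] at hv0
        have hx : x ≠ 0 := fun hx => hv0 ⟨hx, rfl⟩
        have huc : uc (x, 0) ≠ 0 := by simp only [uc]; intro hc; exact hx (by linarith)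
        have h6 := abs_pos.mpr huc
        simp only [uc] at h6 hv
        simp only [abs_zero] at hv
        linarith
      · have := abs_pos.mpr hy
        simp only [uc] at hv ⊢
        linarith

end PingPong

section Main
variable {n i j k l : ℕ}

lemma intertwine (h1 : i < j) (h2 : j < k) (h3 : k < l) (hln : l < n)
    (g : FreeGroup Bool) (v : P2) :
    burau n ((FreeGroup.lift (fun t : Bool => if t then bkl n i k else bkl n j l)) g)
      (iota i j k l v.1)
    = iota i j k l (((FreeGroup.lift (fun b : Bool => if b then MA else MB)) g) v).1 := by
  induction g using FreeGroup.induction_on generalizing v with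
  | C1 => simp
  | of x =>
    cases x
    · -- false: bkl j l / MB
      have hb : ⇑(burau n (bkl n j l)) = bandFun j l :=
        burau_bkl n (l - j - 1) j l (by omega) hln (by omega)
      rw [FreeGroup.lift_apply_of, FreeGroup.lift_apply_of]
      simp only [Bool.false_eq_true, if_false]
      rw [hb]
      exact bandB_iota h1 h2 h3 v.1
    · -- true: bkl i k / MA
      have hb : ⇑(burau n (bkl n i k)) = bandFun i k :=
        burau_bkl n (k - i - 1) i k (by omega) (by omega) (by omega)
      rw [FreeGroup.lift_apply_of, FreeGroup.lift_apply_of]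
      simp only [if_true]
      rw [hb]
      exact bandA_iota h1 h2 h3 v.1
  | inv_of x ih =>
    rw [map_inv, map_inv]
    have hv' := ih (((FreeGroup.lift (fun b : Bool => if b then MA else MB)) (FreeGroup.of x))⁻¹ v)
    rw [show ∀ (e : Equiv.Perm P2) (w : P2), e (e⁻¹ w) = w from fun e w => e.apply_symm_apply w] at hv'
    rw [← hv', show ∀ (e : Equiv.Perm (ℕ → ℚ)) (w : ℕ → ℚ), e⁻¹ (e w) = w from fun e w => e.symm_apply_apply w, map_inv]
  | mul x y ihx ihy =>
    simp only [map_mul, Equiv.Perm.mul_apply]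
    rw [ihy, ihx]

lemma iota_inj (h1 : i < j) (h2 : j < k) (h3 : k < l) {z z' : ℚ × ℚ}
    (h : iota i j k l z = iota i j k l z') : z = z' := by
  have ei := congrFun h i
  have ej := congrFun h j
  simp only [iota] at ei ej
  rw [vA_i, vB_other (by omega) (by omega)] at ei
  rw [vA_other (by omega) (by omega), vB_j] at ej
  have hE : (100:ℚ)^(k+j+l-i) ≠ 0 := pow_ne_zero _ (by norm_num)
  have hF : -((100:ℚ)^(k+l)) ≠ 0 := neg_ne_zero.mpr (pow_ne_zero _ (by norm_num))
  apply Prod.ext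
  · apply mul_right_cancel₀ hE
    linarith [ei]
  · apply mul_right_cancel₀ hF
    linarith [ej]

lemma main_aux (n i j k l : ℕ) (h1 : i < j) (h2 : j < k) (h3 : k < l) (hln : l < n) :
    Function.Injective
      (FreeGroup.lift (fun t : Bool => if t then bkl n i k else bkl n j l) :
        FreeGroup Bool →* BraidGroup n) := by
  rw [injective_iff_map_eq_one]
  intro w hw
  apply phi_injective
  rw [map_one]
  apply Equiv.ext
  intro v
  have hiv := intertwine h1 h2 h3 hln w v
  rw [hw, map_one] at hiv
  have : iota i j k l v.1
      = iota i j k l (((FreeGroup.lift (fun b : Bool => if b then MA else MB)) w) v).1 := by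
    rw [← hiv]
    rfl
  have := iota_inj h1 h2 h3 this
  exact (Subtype.ext this.symm)

end Main
end BKLFree2


/-- **Lemma.** If `n ≥ 4` and `i < j < k < l` are strand indices, then the Birman–Ko–Lee
generators `a_{ik}` and `a_{jl}` generate a free subgroup of `B_n` of rank `2`: the
homomorphism from the free group on two generators sending them to `a_{ik}` and `a_{jl}`
is injective. -/
theorem bkl_crossing_free {n : ℕ} (hn : 4 ≤ n) (i j k l : Fin n)
    (hij : i < j) (hjk : j < k) (hkl : k < l) :
    Function.Injective
      (FreeGroup.lift (fun t : Bool => if t then bkl n i k else bkl n j l) :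
        FreeGroup Bool →* BraidGroup n) := by
  have h1 : (i:ℕ) < (j:ℕ) := hij
  have h2 : (j:ℕ) < (k:ℕ) := hjk
  have h3 : (k:ℕ) < (l:ℕ) := hkl
  exact BKLFree2.main_aux n i j k l h1 h2 h3 l.isLt
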